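/- For every integer N ≥ 0, the L¹ norm over the circle of the Dirichlet kernel D_N(x) = Σ_{j=-N}^{N} e^{2πijx} satisfies ‖D_N‖₁ ≤ 1 + log(2N+1). -/

import Mathlib

open Complex Filter


lemma tele (w : ℂ) (hw : w ≠ 0) (N : ℕ) :
    (w - 1) * ∑ j ∈ Finset.Icc (-(N:ℤ)) (N:ℤ), w ^ j
      = w ^ ((N:ℤ)+1) - w ^ (-(N:ℤ)) := by
  induction N with
  | zero => simp
  | succ n ih =>
    have hset : Finset.Icc (-((n:ℤ)+1)) ((n:ℤ)+1)
        = insert (-((n:ℤ)+1)) (insert ((n:ℤ)+1) (Finset.Icc (-(n:ℤ)) (n:ℤ))) := by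
      ext j; simp only [Finset.mem_Icc, Finset.mem_insert]; omega
    have h1 : (-((n:ℤ)+1)) ∉ insert ((n:ℤ)+1) (Finset.Icc (-(n:ℤ)) (n:ℤ)) := by
      simp only [Finset.mem_insert, Finset.mem_Icc]; omega
    have h2 : ((n:ℤ)+1) ∉ Finset.Icc (-(n:ℤ)) (n:ℤ) := by
      simp only [Finset.mem_Icc]; omega
    push_cast
    rw [hset, Finset.sum_insert h1, Finset.sum_insert h2, mul_add, mul_add, ih]
    have e1 : w ^ ((n:ℤ)+1+1) = w ^ ((n:ℤ)+1) * w := by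
      rw [zpow_add₀ hw, zpow_one]
    have e2 : w ^ (-(n:ℤ)) = w ^ (-((n:ℤ)+1)) * w := by
      rw [show (-(n:ℤ)) = -((n:ℤ)+1) + 1 by ring, zpow_add₀ hw, zpow_one]
    linear_combination -e2 - e1

lemma abs_exp_sub_one (t : ℝ) :
    ‖Complex.exp ((t:ℂ) * Complex.I) - 1‖ = 2 * |Real.sin (t/2)| := by
  rw [Complex.exp_mul_I]
  have hre : (Complex.cos t + Complex.sin t * Complex.I - 1).re = Real.cos t - 1 := by
    simp [Complex.cos_ofReal_re, Complex.sin_ofReal_im]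
  have him : (Complex.cos t + Complex.sin t * Complex.I - 1).im = Real.sin t := by
    simp [Complex.cos_ofReal_im, Complex.sin_ofReal_re]
  rw [Complex.norm_def, Complex.normSq_apply, hre, him, Real.abs_sin_half]
  rw [show (Real.cos t - 1) * (Real.cos t - 1) + Real.sin t * Real.sin t
      = 4 * ((1 - Real.cos t)/2) by nlinarith [Real.sin_sq_add_cos_sq t]]
  rw [show (4:ℝ) * ((1 - Real.cos t)/2) = 2^2 * ((1 - Real.cos t)/2) by norm_num,
    Real.sqrt_mul (by norm_num), Real.sqrt_sq (by norm_num)]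

-- the Dirichlet sum
noncomputable def DS (N : ℕ) (x : ℝ) : ℝ :=
  ‖∑ j ∈ Finset.Icc (-(N:ℤ)) (N:ℤ),
    Complex.exp (2 * (Real.pi : ℂ) * Complex.I * (j : ℂ) * (x : ℂ))‖

lemma DS_cont (N : ℕ) : Continuous (DS N) := by
  unfold DS
  exact continuous_norm.comp (continuous_finset_sum _ fun j _ =>
    Complex.continuous_exp.comp (by fun_prop))

lemma DS_le_card (N : ℕ) (x : ℝ) : DS N x ≤ 2 * N + 1 := by
  unfold DS
  refine le_trans (norm_sum_le _ _) ?_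
  have : ∀ j ∈ Finset.Icc (-(N:ℤ)) (N:ℤ),
      ‖Complex.exp (2 * (Real.pi : ℂ) * Complex.I * (j : ℂ) * (x : ℂ))‖ = 1 := by
    intro j _
    rw [show (2 * (Real.pi : ℂ) * Complex.I * (j : ℂ) * (x : ℂ))
        = ((2*Real.pi*j*x : ℝ):ℂ) * Complex.I by push_cast; ring]
    exact Complex.norm_exp_ofReal_mul_I _
  rw [Finset.sum_congr rfl this, Finset.sum_const, Int.card_Icc]
  rw [show ((N:ℤ) + 1 - (-(N:ℤ))).toNat = 2*N+1 by omega]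
  push_cast; ring_nf; norm_num

lemma DS_le_inv_sin (N : ℕ) {x : ℝ} (hx0 : 0 < x) (hx1 : x < 1) :
    DS N x ≤ 1 / Real.sin (Real.pi * x) := by
  set w : ℂ := Complex.exp (2 * (Real.pi : ℂ) * Complex.I * (x : ℂ)) with hw
  have hw0 : w ≠ 0 := Complex.exp_ne_zero _
  have hterm : ∀ j : ℤ, Complex.exp (2 * (Real.pi : ℂ) * Complex.I * (j : ℂ) * (x : ℂ))
      = w ^ j := by
    intro j
    rw [hw, ← Complex.exp_int_mul]
    congr 1; ring
  have hsin : 0 < Real.sin (Real.pi * x) :=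
    Real.sin_pos_of_pos_of_lt_pi (by positivity)
      (by nlinarith [Real.pi_pos])
  have habs : ‖w - 1‖ = 2 * Real.sin (Real.pi * x) := by
    have : w = Complex.exp (((2*Real.pi*x : ℝ):ℂ) * Complex.I) := by
      rw [hw]; congr 1; push_cast; ring
    rw [this, abs_exp_sub_one, show 2*Real.pi*x/2 = Real.pi * x by ring,
      abs_of_pos hsin]
  have honew : ∀ n : ℤ, ‖w ^ n‖ = 1 := by
    intro n
    rw [norm_zpow, show ‖w‖ = 1 by
      rw [hw, show (2 * (Real.pi : ℂ) * Complex.I * (x : ℂ))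
        = ((2*Real.pi*x : ℝ):ℂ) * Complex.I by push_cast; ring]
      exact Complex.norm_exp_ofReal_mul_I _]
    simp
  have key := tele w hw0 N
  have h2 : ‖w - 1‖ * DS N x ≤ 2 := by
    unfold DS
    simp only [hterm]
    rw [← norm_mul, key]
    calc ‖w ^ ((N:ℤ)+1) - w ^ (-(N:ℤ))‖
        ≤ ‖w ^ ((N:ℤ)+1)‖ + ‖w ^ (-(N:ℤ))‖ :=
          norm_sub_le _ _
      _ = 2 := by rw [honew, honew]; norm_num
  rw [habs] at h2
  rw [le_div_iff₀ hsin]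
  nlinarith [DS_le_card N x]

lemma DS_le_left (N : ℕ) {x : ℝ} (hx0 : 0 < x) (hx1 : x ≤ 1/2) :
    DS N x ≤ 1 / (2 * x) := by
  have hs : 2 * x ≤ Real.sin (Real.pi * x) := by
    have := Real.mul_le_sin (x := Real.pi * x) (by positivity)
      (by nlinarith [Real.pi_pos])
    calc 2 * x = 2 / Real.pi * (Real.pi * x) := by
          field_simp
      _ ≤ Real.sin (Real.pi * x) := this
  refine le_trans (DS_le_inv_sin N hx0 (by linarith)) ?_
  exact one_div_le_one_div_of_le (by positivity) hs

lemma DS_le_right (N : ℕ) {x : ℝ} (hx0 : 1/2 ≤ x) (hx1 : x < 1) :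
    DS N x ≤ 1 / (2 * (1 - x)) := by
  have hs : 2 * (1 - x) ≤ Real.sin (Real.pi * x) := by
    have h := Real.mul_le_sin (x := Real.pi * (1 - x)) (by nlinarith [Real.pi_pos])
      (by nlinarith [Real.pi_pos])
    have : Real.sin (Real.pi * (1 - x)) = Real.sin (Real.pi * x) := by
      rw [show Real.pi * (1 - x) = Real.pi - Real.pi * x by ring, Real.sin_pi_sub]
    rw [this] at h
    calc 2 * (1 - x) = 2 / Real.pi * (Real.pi * (1 - x)) := by field_simp
      _ ≤ Real.sin (Real.pi * x) := h
  refine le_trans (DS_le_inv_sin N (by linarith) hx1) ?_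
  exact one_div_le_one_div_of_le (by nlinarith) hs

/-- The Dirichlet kernel `D_N(x) = ∑_{j=-N}^N e^{2πijx}` satisfies
`‖D_N‖₁ ≤ 1 + log (2N+1)` on the circle `T = ℝ/ℤ` (normalized Haar measure,
realized as the integral over one period). -/
theorem dirichlet_kernel_L1_bound (N : ℕ) :
    (∫ x in (0:ℝ)..1,
      ‖∑ j ∈ Finset.Icc (-(N:ℤ)) (N:ℤ),
        Complex.exp (2 * (Real.pi : ℂ) * Complex.I * (j : ℂ) * (x : ℂ))‖) ≤
      1 + Real.log (2 * N + 1) := by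
  show (∫ x in (0:ℝ)..1, DS N x) ≤ 1 + Real.log (2 * N + 1)
  set δ : ℝ := 1 / (2 * (2 * N + 1)) with hδ
  have hN1 : (0:ℝ) < 2 * N + 1 := by positivity
  have hδ0 : 0 < δ := by positivity
  have hδh : δ ≤ 1/2 := by
    rw [hδ, div_le_div_iff₀ (by positivity) (by norm_num)]
    nlinarith
  have hδ1 : 1/2 ≤ 1 - δ := by linarith
  have hDSi : ∀ a b : ℝ, IntervalIntegrable (DS N) MeasureTheory.volume a b :=
    fun a b => (DS_cont N).intervalIntegrable a b
  have hsplit : (∫ x in (0:ℝ)..1, DS N x)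
      = (∫ x in (0:ℝ)..δ, DS N x) + (∫ x in δ..(1/2:ℝ), DS N x)
        + (∫ x in (1/2:ℝ)..(1-δ), DS N x) + (∫ x in (1-δ)..(1:ℝ), DS N x) := by
    rw [intervalIntegral.integral_add_adjacent_intervals (hDSi 0 δ) (hDSi δ (1/2)),
      intervalIntegral.integral_add_adjacent_intervals (hDSi 0 (1/2)) (hDSi (1/2) (1-δ)),
      intervalIntegral.integral_add_adjacent_intervals (hDSi 0 (1-δ)) (hDSi (1-δ) 1)]
  have hintL : IntervalIntegrable (fun x : ℝ => 1/(2*x)) MeasureTheory.volume δ (1/2) := by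
    apply ContinuousOn.intervalIntegrable
    apply ContinuousOn.div continuousOn_const (by fun_prop)
    intro x hx
    rw [Set.uIcc_of_le hδh] at hx
    exact ne_of_gt (by nlinarith [hx.1])
  have hintR : IntervalIntegrable (fun x : ℝ => 1/(2*(1-x))) MeasureTheory.volume (1/2) (1-δ) := by
    apply ContinuousOn.intervalIntegrable
    apply ContinuousOn.div continuousOn_const (by fun_prop)
    intro x hx
    rw [Set.uIcc_of_le hδ1] at hx
    exact ne_of_gt (by nlinarith [hx.2])
  -- bound 1
  have b1 : (∫ x in (0:ℝ)..δ, DS N x) ≤ 1/2 := by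
    calc (∫ x in (0:ℝ)..δ, DS N x) ≤ ∫ _ in (0:ℝ)..δ, (2*(N:ℝ)+1) := by
          apply intervalIntegral.integral_mono_on (le_of_lt hδ0) (hDSi 0 δ)
            intervalIntegrable_const
          exact fun x _ => DS_le_card N x
      _ = δ * (2*N+1) := by rw [intervalIntegral.integral_const, smul_eq_mul]; ring
      _ = 1/2 := by rw [hδ]; field_simp
  -- bound 4
  have b4 : (∫ x in (1-δ)..(1:ℝ), DS N x) ≤ 1/2 := by
    calc (∫ x in (1-δ)..(1:ℝ), DS N x) ≤ ∫ _ in (1-δ)..(1:ℝ), (2*(N:ℝ)+1) := by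
          apply intervalIntegral.integral_mono_on (by linarith) (hDSi _ _)
            intervalIntegrable_const
          exact fun x _ => DS_le_card N x
      _ = δ * (2*N+1) := by rw [intervalIntegral.integral_const, smul_eq_mul]; ring
      _ = 1/2 := by rw [hδ]; field_simp
  -- the model integral
  have hmodel : (∫ x in δ..(1/2:ℝ), 1/(2*x)) = (1/2) * Real.log (2*N+1) := by
    have : ∀ x : ℝ, 1/(2*x) = (1/2) * (1/x) := fun x => by ring
    simp only [this]
    rw [intervalIntegral.integral_const_mul, integral_one_div]
    · congr 1
      rw [show (1:ℝ)/2/δ = 2*N+1 by rw [hδ]; field_simp]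
    · intro h
      rw [Set.uIcc_of_le hδh] at h
      exact absurd h.1 (by linarith)
  -- bound 2
  have b2 : (∫ x in δ..(1/2:ℝ), DS N x) ≤ (1/2) * Real.log (2*N+1) := by
    rw [← hmodel]
    apply intervalIntegral.integral_mono_on hδh (hDSi _ _) hintL
    intro x hx
    exact DS_le_left N (lt_of_lt_of_le hδ0 hx.1) hx.2
  -- bound 3
  have b3 : (∫ x in (1/2:ℝ)..(1-δ), DS N x) ≤ (1/2) * Real.log (2*N+1) := by
    have hflip : (∫ x in (1/2:ℝ)..(1-δ), 1/(2*(1-x))) = (1/2) * Real.log (2*N+1) := by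
      have := intervalIntegral.integral_comp_sub_left (a := (1/2:ℝ)) (b := 1-δ)
        (fun y : ℝ => 1/(2*y)) 1
      rw [show (1:ℝ) - (1-δ) = δ by ring, show (1:ℝ) - 1/2 = 1/2 by norm_num] at this
      rw [this, hmodel]
    rw [← hflip]
    apply intervalIntegral.integral_mono_on hδ1 (hDSi _ _) hintR
    intro x hx
    exact DS_le_right N hx.1 (by nlinarith [hx.2])
  rw [hsplit]
  push_cast
  linarith
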